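/- (Corollary 2.) Let ‖·‖ be a norm on ℝⁿ, let 0 < α ≤ β, let 2 ≤ b, let ε > 0, and let M ⊂ ℝⁿ be a finite set with |M| = m and b ≤ m, such that every subset S ⊆ M with |S| = b is α-β-connected. If m − b + 1 > N_ε(B(0, α, β)), then M is not ε-separated; i.e., there exist z, z' ∈ M with z ≠ z' and ‖z − z'‖ < ε. -/

import Mathlib

/-- `S` is α-β-connected (w.r.t. the norm `N` on `ℝⁿ`):
(i) `α` is the minimum of the pairwise distances of `S`, and
(ii) `β` is the minimum of all `r ≥ 0` such that the graph on `S` joining two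
distinct points exactly when their distance is `≤ r` is connected. -/
def ABConnected (n : ℕ) (N : (Fin n → ℝ) → ℝ) (α β : ℝ)
    (S : Finset (Fin n → ℝ)) : Prop :=
  IsLeast {d : ℝ | ∃ x ∈ S, ∃ y ∈ S, x ≠ y ∧ N (x - y) = d} α ∧
  IsLeast {r : ℝ | 0 ≤ r ∧
    (SimpleGraph.fromRel (fun a b : {x // x ∈ S} => N (a.1 - b.1) ≤ r)).Connected} β

/-- The ε-metric entropy of `X ⊆ ℝⁿ` (w.r.t. the norm `N`): the supremum of the
cardinalities of finite ε-separated subsets of `X`. -/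
noncomputable def metricEntropy (n : ℕ) (N : (Fin n → ℝ) → ℝ) (ε : ℝ)
    (X : Set (Fin n → ℝ)) : ℕ∞ :=
  ⨆ (S : Finset (Fin n → ℝ)) (_ : ↑S ⊆ X)
    (_ : ∀ x ∈ S, ∀ y ∈ S, x ≠ y → ε ≤ N (x - y)), (S.card : ℕ∞)

/-- Corollary 2: if every `b`-sized subset of `M` (`|M| = m ≥ b ≥ 2`)
is α-β-connected (`0 < α ≤ β`) and `m − b + 1` exceeds the ε-metric entropy of the
annulus `B(0, α, β)`, then `M` is not ε-separated. -/
theorem not_separated_of_entropy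
    (n : ℕ) (N : (Fin n → ℝ) → ℝ)
    (hN_eq : ∀ x, N x = 0 ↔ x = 0)
    (hN_add : ∀ x y, N (x + y) ≤ N x + N y)
    (hN_smul : ∀ (a : ℝ) (x : Fin n → ℝ), N (a • x) = |a| * N x)
    (b m : ℕ) (hb : 2 ≤ b) (ε : ℝ) (hε : 0 < ε)
    (M : Finset (Fin n → ℝ)) (hM : M.card = m) (hbm : b ≤ m)
    (α β : ℝ) (hα : 0 < α) (hαβ : α ≤ β)
    (hconn : ∀ S ⊆ M, S.card = b → ABConnected n N α β S)
    (hcard : ((m - b + 1 : ℕ) : ℕ∞) >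
      metricEntropy n N ε {y : Fin n → ℝ | α ≤ N y ∧ N y ≤ β}) :
    ∃ z ∈ M, ∃ z' ∈ M, z ≠ z' ∧ N (z - z') < ε := by
  by_contra hcon
  push_neg at hcon
  -- hcon : ∀ z ∈ M, ∀ z' ∈ M, z ≠ z' → ε ≤ N (z - z')
  have hNneg : ∀ x, N (-x) = N x := by
    intro x
    have h := hN_smul (-1) x
    simpa using h
  -- every point of a b-subset has a neighbor at distance in [α, β]
  have key : ∀ S ⊆ M, S.card = b → ∀ x ∈ S,
      ∃ y ∈ S, y ≠ x ∧ α ≤ N (x - y) ∧ N (x - y) ≤ β := by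
    intro S hSM hSb x hx
    obtain ⟨⟨_, hαlb⟩, ⟨⟨_, hβconn⟩, _⟩⟩ := hconn S hSM hSb
    have h1 : 1 < S.card := by omega
    obtain ⟨y, hy, hyx⟩ := Finset.exists_mem_ne h1 x
    have hne : (⟨x, hx⟩ : {v // v ∈ S}) ≠ ⟨y, hy⟩ := by
      intro h; exact hyx (congrArg Subtype.val h).symm
    obtain ⟨p⟩ := hβconn.preconnected ⟨x, hx⟩ ⟨y, hy⟩
    cases p with
    | nil => exact absurd rfl hne
    | cons h q =>
        rename_i w
        obtain ⟨hwne, hor⟩ := h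
        have hβle : N (x - w.1) ≤ β := by
          rcases hor with h | h
          · exact h
          · rw [show x - w.1 = -(w.1 - x) by ring, hNneg]; exact h
        have hxw : x ≠ w.1 := fun h => hwne (Subtype.ext h)
        have hαle : α ≤ N (x - w.1) := hαlb ⟨x, hx, w.1, w.2, hxw, rfl⟩
        exact ⟨w.1, w.2, fun h => hxw h.symm, hαle, hβle⟩
  have hm2 : 2 ≤ M.card := by omega
  obtain ⟨z, hz⟩ := Finset.card_pos.mp (by omega : 0 < M.card)
  set T := M.filter (fun z' => z' ≠ z ∧ α ≤ N (z - z') ∧ N (z - z') ≤ β) with hT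
  -- T has at least m - b + 1 elements
  have hTcard : m - b + 1 ≤ T.card := by
    by_contra hTc
    push_neg at hTc
    have hTM : T ⊆ M := Finset.filter_subset _ _
    have hzT : z ∉ T := by
      intro h
      exact ((Finset.mem_filter.mp h).2.1) rfl
    have hins : insert z T ⊆ M := Finset.insert_subset hz hTM
    have hinscard : (insert z T).card = T.card + 1 := Finset.card_insert_of_notMem hzT
    set W := M \ insert z T with hW
    have hWcard : W.card = m - (T.card + 1) := by
      rw [hW, Finset.card_sdiff_of_subset hins, hinscard, hM]
    have hbW : b - 1 ≤ W.card := by omega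
    obtain ⟨W', hW'W, hW'card⟩ := Finset.exists_subset_card_eq (s := W) (n := b - 1) hbW
    have hzW' : z ∉ W' := by
      intro h
      exact (Finset.mem_sdiff.mp (hW'W h)).2 (Finset.mem_insert_self z T)
    set S := insert z W' with hS
    have hSM : S ⊆ M := Finset.insert_subset hz (hW'W.trans (Finset.sdiff_subset))
    have hScard : S.card = b := by
      rw [hS, Finset.card_insert_of_notMem hzW', hW'card]; omega
    obtain ⟨y, hyS, hyz, hαle, hβle⟩ := key S hSM hScard z (Finset.mem_insert_self z W')
    have hyW' : y ∈ W' := by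
      rcases Finset.mem_insert.mp hyS with h | h
      · exact absurd h hyz
      · exact h
    have hyM : y ∈ M := hSM hyS
    have : y ∈ T := Finset.mem_filter.mpr ⟨hyM, hyz, hαle, hβle⟩
    exact (Finset.mem_sdiff.mp (hW'W hyW')).2 (Finset.mem_insert_of_mem this)
  -- the image of T under (· - z) is ε-separated inside the annulus
  set U := T.image (fun z' => z' - z) with hU
  have hinj : Set.InjOn (fun z' => z' - z) T := fun a _ b _ h => by
    simpa using sub_left_injective h
  have hUcard : U.card = T.card := Finset.card_image_of_injOn hinj
  have hUsub : (U : Set (Fin n → ℝ)) ⊆ {y : Fin n → ℝ | α ≤ N y ∧ N y ≤ β} := by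
    intro u hu
    obtain ⟨z', hz', rfl⟩ := Finset.mem_image.mp hu
    obtain ⟨_, _, h1, h2⟩ := Finset.mem_filter.mp hz'
    constructor
    · rw [show z' - z = -(z - z') by ring, hNneg]; exact h1
    · rw [show z' - z = -(z - z') by ring, hNneg]; exact h2
  have hUsep : ∀ x ∈ U, ∀ y ∈ U, x ≠ y → ε ≤ N (x - y) := by
    intro x hx y hy hxy
    obtain ⟨a, ha, rfl⟩ := Finset.mem_image.mp hx
    obtain ⟨c, hc, rfl⟩ := Finset.mem_image.mp hy
    have hac : a ≠ c := fun h => hxy (by rw [h])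
    have := hcon a ((Finset.filter_subset _ _) ha) c ((Finset.filter_subset _ _) hc) hac
    rw [show a - z - (c - z) = a - c by ring]
    exact this
  have hle : ((m - b + 1 : ℕ) : ℕ∞) ≤
      metricEntropy n N ε {y : Fin n → ℝ | α ≤ N y ∧ N y ≤ β} := by
    calc ((m - b + 1 : ℕ) : ℕ∞) ≤ (U.card : ℕ∞) := by
          rw [hUcard]; exact_mod_cast hTcard
      _ ≤ _ := by
          unfold metricEntropy
          refine le_iSup_of_le U ?_
          refine le_iSup_of_le hUsub ?_
          exact le_iSup_of_le hUsep le_rfl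
  exact absurd hle (not_le.mpr hcard)
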